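/- Let P : Cᵒᵖ → BoolAlg be a Boolean doctrine over a category C with finite products, and let A = (A_X)_{X ∈ C} and B = (B_X)_{X ∈ C} be families with A_X, B_X ⊆ P(X) for each X ∈ C. Then the following are equivalent: (1) the universal filter for P generated by A intersects the universal ideal for P generated by B in some component; (2) there are Y₁, …, Y_n, Z₁, …, Z_m ∈ C, elements α₁ ∈ A_{Y₁}, …, α_n ∈ A_{Y_n}, β₁ ∈ B_{Z₁}, …, β_m ∈ B_{Z_m}, and morphisms fᵢ : ∏_{j=1}^{m} Zⱼ → Yᵢ (i = 1, …, n) such that, in P(∏_{j=1}^{m} Zⱼ), ⋀_{i=1}^{n} P(fᵢ)(αᵢ) ≤ ⋁_{j=1}^{m} P(prⱼ)(βⱼ). -/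

import Mathlib

open CategoryTheory CategoryTheory.Limits Opposite

universe w v u v₁ u₁ v₂ u₂ v₃ u₃

namespace BooleanDoctrine

/-- Elements of a Boolean algebra in the category `BoolAlg` can be acted on by morphisms. -/
instance (X Y : BoolAlg) : FunLike (X ⟶ Y) X Y :=
  { coe := fun f => f.hom
    coe_injective := by
      intro f g h
      ext x
      exact congrFun h x }

/-- A filter of a Boolean algebra: contains `⊤`, closed under binary meets, upward closed. -/
def IsBAFilter {A : Type*} [BooleanAlgebra A] (F : Set A) : Prop :=
  (⊤ : A) ∈ F ∧ (∀ a b : A, a ∈ F → b ∈ F → a ⊓ b ∈ F) ∧ ∀ a b : A, a ∈ F → a ≤ b → b ∈ F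

/-- The fiber of a Boolean doctrine at an object of the base category. -/
abbrev fiber {C : Type u₁} [Category.{v₁} C] (P : Cᵒᵖ ⥤ BoolAlg.{w}) (X : C) : Type w :=
  P.obj (op X)

/-- A universal filter for a Boolean doctrine `P : Cᵒᵖ ⥤ BoolAlg`. -/
def IsUniversalFilter {C : Type u₁} [Category.{v₁} C] [HasFiniteProducts C]
    (P : Cᵒᵖ ⥤ BoolAlg.{w}) (F : ∀ X : C, Set (P.obj (op X))) : Prop :=
  (∀ (X Y : C) (f : X ⟶ Y) (α : P.obj (op Y)), α ∈ F Y → P.map f.op α ∈ F X) ∧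
    ∀ X : C, IsBAFilter (F X)

/-- A universal ideal for a Boolean doctrine `P : Cᵒᵖ ⥤ BoolAlg`. -/
def IsUniversalIdeal {C : Type u₁} [Category.{v₁} C] [HasFiniteProducts C]
    (P : Cᵒᵖ ⥤ BoolAlg.{w}) (I : ∀ X : C, Set (P.obj (op X))) : Prop :=
  (∀ (X Y : C) (m : ℕ) (f : Fin m → (X ⟶ Y)) (α : P.obj (op Y)),
      (Finset.univ.inf fun j => P.map (f j).op α) ∈ I X → α ∈ I Y) ∧
    (∀ (X : C) (a b : P.obj (op X)), a ≤ b → b ∈ I X → a ∈ I X) ∧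
    (∀ (X₁ X₂ : C) (α₁ : P.obj (op X₁)) (α₂ : P.obj (op X₂)), α₁ ∈ I X₁ → α₂ ∈ I X₂ →
      P.map (prod.fst : X₁ ⨯ X₂ ⟶ X₁).op α₁ ⊔ P.map (prod.snd : X₁ ⨯ X₂ ⟶ X₂).op α₂ ∈
        I (X₁ ⨯ X₂)) ∧
    (⊥ : P.obj (op (⊤_ C))) ∈ I (⊤_ C)

/-- A universal ultrafilter for a Boolean doctrine `P : Cᵒᵖ ⥤ BoolAlg`. -/
def IsUniversalUltrafilter {C : Type u₁} [Category.{v₁} C] [HasFiniteProducts C]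
    (P : Cᵒᵖ ⥤ BoolAlg.{w}) (F : ∀ X : C, Set (P.obj (op X))) : Prop :=
  (∀ (X Y : C) (f : X ⟶ Y) (α : P.obj (op Y)), α ∈ F Y → P.map f.op α ∈ F X) ∧
    (∀ X : C, IsBAFilter (F X)) ∧
    (∀ (X₁ X₂ : C) (α₁ : P.obj (op X₁)) (α₂ : P.obj (op X₂)),
      P.map (prod.fst : X₁ ⨯ X₂ ⟶ X₁).op α₁ ⊔ P.map (prod.snd : X₁ ⨯ X₂ ⟶ X₂).op α₂ ∈
          F (X₁ ⨯ X₂) →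
        α₁ ∈ F X₁ ∨ α₂ ∈ F X₂) ∧
    (⊥ : P.obj (op (⊤_ C))) ∉ F (⊤_ C)

/-- Richness of a Boolean doctrine with respect to a family of subsets of the fibers. -/
def IsRich {C : Type u₁} [Category.{v₁} C] [HasFiniteProducts C]
    (P : Cᵒᵖ ⥤ BoolAlg.{w}) (F : ∀ X : C, Set (P.obj (op X))) : Prop :=
  ∀ (X : C) (α : P.obj (op X)), α ∉ F X → ∃ c : (⊤_ C) ⟶ X, P.map c.op α ∉ F (⊤_ C)

/-- The failure of the "universal closure" of `a` witnessed by a constant `c : ⊤ ⟶ X`. -/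
def IsRichAt {C : Type u₁} [Category.{v₁} C] [HasFiniteProducts C]
    (P : Cᵒᵖ ⥤ BoolAlg.{w}) (F : ∀ X : C, Set (P.obj (op X)))
    (X : C) (a : P.obj (op X)) : Prop :=
  ∃ c : (⊤_ C) ⟶ X, P.map c.op a ∉ F (⊤_ C)

/-- The universal filter generated by a family of subsets of the fibers: the intersection of
all universal filters containing the family componentwise. -/
def genUnivFilter {C : Type u₁} [Category.{v₁} C] [HasFiniteProducts C]
    (P : Cᵒᵖ ⥤ BoolAlg.{w}) (A : ∀ X : C, Set (P.obj (op X))) :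
    ∀ X : C, Set (P.obj (op X)) := fun X =>
  {φ | ∀ G : ∀ X' : C, Set (P.obj (op X')),
    IsUniversalFilter P G → (∀ X', A X' ⊆ G X') → φ ∈ G X}

/-- The universal ideal generated by a family of subsets of the fibers: the intersection of
all universal ideals containing the family componentwise. -/
def genUnivIdeal {C : Type u₁} [Category.{v₁} C] [HasFiniteProducts C]
    (P : Cᵒᵖ ⥤ BoolAlg.{w}) (A : ∀ X : C, Set (P.obj (op X))) :
    ∀ X : C, Set (P.obj (op X)) := fun X =>
  {φ | ∀ J : ∀ X' : C, Set (P.obj (op X')),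
    IsUniversalIdeal P J → (∀ X', A X' ⊆ J X') → φ ∈ J X}

/-- The family of subsets of the fibers placing the element `α i` in the component `Y i`. -/
def familyOfPoints {C : Type u₁} [Category.{v₁} C] (P : Cᵒᵖ ⥤ BoolAlg.{w}) {ι : Type u₃}
    (Y : ι → C) (α : ∀ i, P.obj (op (Y i))) : ∀ X : C, Set (P.obj (op X)) := fun X =>
  {a | ∃ (i : ι) (h : Y i = X), a = P.map (eqToHom h.symm).op (α i)}

/-- The subsets doctrine, sending a set to its powerset Boolean algebra and a function to
its preimage map. -/
def subsetsDoctrine : (Type v)ᵒᵖ ⥤ BoolAlg.{v} where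
  obj X := BoolAlg.of (Set X.unop)
  map f :=
    BoolAlg.ofHom
    { toFun := fun S => f.unop ⁻¹' S
      map_sup' := fun _ _ => rfl
      map_inf' := fun _ _ => rfl
      map_top' := rfl
      map_bot' := rfl }
  map_id _ := rfl
  map_comp _ _ := rfl

/-- A Boolean doctrine morphism: a finite-product-preserving functor together with a
natural transformation. -/
structure DoctrineHom {C : Type u₁} [Category.{v₁} C] {D : Type u₂} [Category.{v₂} D]
    (P : Cᵒᵖ ⥤ BoolAlg.{w}) (R : Dᵒᵖ ⥤ BoolAlg.{w}) where
  functor : C ⥤ D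
  preserves : PreservesFiniteProducts functor
  trans : P ⟶ functor.op ⋙ R

/-- Composition of Boolean doctrine morphisms. -/
def DoctrineHom.comp {C : Type u₁} [Category.{v₁} C] {D : Type u₂} [Category.{v₂} D]
    {E : Type u₃} [Category.{v₃} E]
    {P : Cᵒᵖ ⥤ BoolAlg.{w}} {R : Dᵒᵖ ⥤ BoolAlg.{w}} {S : Eᵒᵖ ⥤ BoolAlg.{w}}
    (Φ : DoctrineHom P R) (Ψ : DoctrineHom R S) : DoctrineHom P S where
  functor := Φ.functor ⋙ Ψ.functor
  preserves := by
    have := Φ.preserves; have := Ψ.preserves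
    infer_instance
  trans := Φ.trans ≫ Functor.whiskerLeft Φ.functor.op Ψ.trans

/-- A first-order structure on a Boolean doctrine: fiberwise right adjoints to reindexing
along first projections, satisfying the Beck–Chevalley condition. -/
structure FOStructure {C : Type u₁} [Category.{v₁} C] [HasFiniteProducts C]
    (P : Cᵒᵖ ⥤ BoolAlg.{w}) where
  fa : ∀ X Y : C, P.obj (op (X ⨯ Y)) → P.obj (op X)
  adj : ∀ (X Y : C) (α : P.obj (op X)) (β : P.obj (op (X ⨯ Y))),
      α ≤ fa X Y β ↔ P.map (prod.fst : X ⨯ Y ⟶ X).op α ≤ β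
  bc : ∀ (X X' Y : C) (f : X' ⟶ X) (β : P.obj (op (X ⨯ Y))),
      P.map f.op (fa X Y β) = fa X' Y (P.map (prod.map f (𝟙 Y)).op β)

/-- The existential quantifier `∃ = ¬∀¬` associated to a first-order structure. -/
noncomputable def FOStructure.ex {C : Type u₁} [Category.{v₁} C] [HasFiniteProducts C]
    {P : Cᵒᵖ ⥤ BoolAlg.{w}} (fo : FOStructure P) (X Y : C)
    (β : P.obj (op (X ⨯ Y))) : P.obj (op X) :=
  (fo.fa X Y βᶜ)ᶜ

/-- The canonical comparison morphism `M X ⨯ M Y ⟶ M (X ⨯ Y)` of a Boolean doctrine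
morphism, inverse to the product comparison morphism. -/
noncomputable def DoctrineHom.prodPair {C : Type u₁} [Category.{v₁} C] [HasFiniteProducts C]
    {D : Type u₂} [Category.{v₂} D] [HasFiniteProducts D]
    {P : Cᵒᵖ ⥤ BoolAlg.{w}} {R : Dᵒᵖ ⥤ BoolAlg.{w}} (Φ : DoctrineHom P R) (X Y : C) :
    (Φ.functor.obj X ⨯ Φ.functor.obj Y) ⟶ Φ.functor.obj (X ⨯ Y) :=
  letI := Φ.preserves
  (PreservesLimitPair.iso Φ.functor X Y).inv

/-- The image of an element of `P (X ⨯ Y)` in `R (M X ⨯ M Y)`, transported along the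
canonical isomorphism `M (X ⨯ Y) ≅ M X ⨯ M Y`. -/
noncomputable def DoctrineHom.transProd {C : Type u₁} [Category.{v₁} C] [HasFiniteProducts C]
    {D : Type u₂} [Category.{v₂} D] [HasFiniteProducts D]
    {P : Cᵒᵖ ⥤ BoolAlg.{w}} {R : Dᵒᵖ ⥤ BoolAlg.{w}} (Φ : DoctrineHom P R) (X Y : C)
    (α : P.obj (op (X ⨯ Y))) : R.obj (op (Φ.functor.obj X ⨯ Φ.functor.obj Y)) :=
  R.map (Φ.prodPair X Y).op (Φ.trans.app (op (X ⨯ Y)) α)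

/-- A Boolean doctrine morphism between first-order Boolean doctrines is first-order when it
commutes with the universal quantifiers. -/
def DoctrineHom.IsFO {C : Type u₁} [Category.{v₁} C] [HasFiniteProducts C]
    {D : Type u₂} [Category.{v₂} D] [HasFiniteProducts D]
    {P : Cᵒᵖ ⥤ BoolAlg.{w}} {R : Dᵒᵖ ⥤ BoolAlg.{w}} (Φ : DoctrineHom P R)
    (foP : FOStructure P) (foR : FOStructure R) : Prop :=
  ∀ (X Y : C) (β : P.obj (op (X ⨯ Y))),
    (Φ.trans.app (op X) (foP.fa X Y β) : R.obj (op (Φ.functor.obj X))) =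
      foR.fa (Φ.functor.obj X) (Φ.functor.obj Y) (Φ.transProd X Y β)

/-- The Boolean doctrine morphism with identity functor part induced by a natural
transformation between two doctrines over the same base. -/
def idDoctrineHom {C : Type u₁} [Category.{v₁} C] {P Q : Cᵒᵖ ⥤ BoolAlg.{w}} (η : P ⟶ Q) :
    DoctrineHom P Q where
  functor := 𝟭 C
  preserves := inferInstance
  trans := η

/-- A quantifier completion of a Boolean doctrine `P`: a first-order Boolean doctrine `Q`
over the same base category together with a Boolean doctrine morphism `(𝟭 C, ι) : P ⟶ Q`
whose functor part is the identity, such that every Boolean doctrine morphism from `P` to a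
first-order Boolean doctrine factors uniquely through it via a first-order Boolean doctrine
morphism. -/
structure QuantifierCompletion.{w', v', u', v₁', u₁'} {C : Type u₁'} [Category.{v₁'} C]
    [HasFiniteProducts C] (P : Cᵒᵖ ⥤ BoolAlg.{w'}) where
  Q : Cᵒᵖ ⥤ BoolAlg.{w'}
  fo : FOStructure Q
  ι : P ⟶ Q
  univ : ∀ {D : Type u'} [Category.{v'} D] [HasFiniteProducts D]
      (R : Dᵒᵖ ⥤ BoolAlg.{w'}) (foR : FOStructure R) (Φ : DoctrineHom P R),
      ∃! Ψ : DoctrineHom Q R, Ψ.IsFO fo foR ∧ Φ = (idDoctrineHom ι).comp Ψ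

/-- A propositional model of a Boolean doctrine: a Boolean doctrine morphism to the
subsets doctrine. -/
abbrev PropModel {C : Type u} [Category.{v} C] (P : Cᵒᵖ ⥤ BoolAlg.{v}) :=
  DoctrineHom P subsetsDoctrine.{v}

/-- The subset of `M X` interpreting an element `α ∈ P X` in a propositional model. -/
def PropModel.interp {C : Type u} [Category.{v} C] {P : Cᵒᵖ ⥤ BoolAlg.{v}}
    (M : PropModel P) {X : C} (α : P.obj (op X)) : Set (M.functor.obj X) :=
  M.trans.app (op X) α



/-- The object map of a Boolean doctrine morphism. -/
abbrev DoctrineHom.onObj {C : Type u₁} [Category.{v₁} C] {D : Type u₂} [Category.{v₂} D]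
    {P : Cᵒᵖ ⥤ BoolAlg.{w}} {R : Dᵒᵖ ⥤ BoolAlg.{w}} (Φ : DoctrineHom P R) (X : C) : D :=
  Φ.functor.obj X

/-- The component at `X` of the natural transformation of a Boolean doctrine morphism,
applied to an element of the fiber. -/
abbrev DoctrineHom.appAt {C : Type u₁} [Category.{v₁} C] {D : Type u₂} [Category.{v₂} D]
    {P : Cᵒᵖ ⥤ BoolAlg.{w}} {R : Dᵒᵖ ⥤ BoolAlg.{w}} (Φ : DoctrineHom P R) (X : C)
    (a : P.obj (op X)) : R.obj (op (Φ.functor.obj X)) :=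
  Φ.trans.app (op X) a

instance (X Y : BoolAlg) : BoundedLatticeHomClass (X ⟶ Y) X Y where
  map_sup f := map_sup f.hom
  map_inf f := map_inf f.hom
  map_top f := map_top f.hom
  map_bot f := map_bot f.hom

section OrderHelpers
variable {L : Type*} {ι κ : Type*}

lemma sup_univ_add [SemilatticeSup L] [OrderBot L] {m n : ℕ} (g : Fin (m + n) → L) :
    Finset.univ.sup g = (Finset.univ.sup fun i : Fin m => g (Fin.castAdd n i)) ⊔
      (Finset.univ.sup fun i : Fin n => g (Fin.natAdd m i)) := by
  apply le_antisymm
  · apply Finset.sup_le; intro j _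
    refine Fin.addCases (motive := fun j => g j ≤ _) (fun i => ?_) (fun i => ?_) j
    · exact le_sup_of_le_left
        (Finset.le_sup (f := fun i : Fin m => g (Fin.castAdd n i)) (Finset.mem_univ i))
    · exact le_sup_of_le_right
        (Finset.le_sup (f := fun i : Fin n => g (Fin.natAdd m i)) (Finset.mem_univ i))
  · exact sup_le (Finset.sup_le fun i _ => Finset.le_sup (Finset.mem_univ _))
      (Finset.sup_le fun i _ => Finset.le_sup (Finset.mem_univ _))

lemma inf_univ_add [SemilatticeInf L] [OrderTop L] {m n : ℕ} (g : Fin (m + n) → L) :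
    Finset.univ.inf g = (Finset.univ.inf fun i : Fin m => g (Fin.castAdd n i)) ⊓
      (Finset.univ.inf fun i : Fin n => g (Fin.natAdd m i)) :=
  sup_univ_add (L := Lᵒᵈ) g

lemma sup_univ_castSucc [SemilatticeSup L] [OrderBot L] {m : ℕ} (g : Fin (m + 1) → L) :
    Finset.univ.sup g = (Finset.univ.sup fun i : Fin m => g i.castSucc) ⊔ g (Fin.last m) := by
  apply le_antisymm
  · apply Finset.sup_le; intro j _
    refine Fin.lastCases (motive := fun j => g j ≤ _) le_sup_right (fun i => ?_) j
    exact le_sup_of_le_left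
      (Finset.le_sup (f := fun i : Fin m => g i.castSucc) (Finset.mem_univ i))
  · exact sup_le (Finset.sup_le fun i _ => Finset.le_sup (Finset.mem_univ _))
      (Finset.le_sup (Finset.mem_univ _))

lemma inf_univ_equiv [Fintype ι] [Fintype κ] [SemilatticeInf L] [OrderTop L]
    (e : ι ≃ κ) (g : κ → L) :
    (Finset.univ.inf fun i => g (e i)) = Finset.univ.inf g := by
  apply le_antisymm
  · apply Finset.le_inf; intro j _
    simpa using Finset.inf_le (f := fun i => g (e i)) (Finset.mem_univ (e.symm j))
  · exact Finset.le_inf fun i _ => Finset.inf_le (Finset.mem_univ _)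

lemma IsBAFilter.finset_inf {A : Type*} [BooleanAlgebra A] {F : Set A}
    (hF : IsBAFilter F) (s : Finset ι) (g : ι → A) (h : ∀ i ∈ s, g i ∈ F) :
    s.inf g ∈ F := by
  classical
  induction s using Finset.induction with
  | empty => simpa using hF.1
  | insert _ _ hx ih =>
    rw [Finset.inf_insert]
    exact hF.2.1 _ _ (h _ (Finset.mem_insert_self _ _))
      (ih fun i hi => h i (Finset.mem_insert_of_mem hi))

end OrderHelpers

section DoctrineHelpers
variable {C : Type u₁} [Category.{v₁} C] (P : Cᵒᵖ ⥤ BoolAlg.{w})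

lemma pmap_comp {X Y W : C} (f : X ⟶ Y) (g : Y ⟶ W) (a : P.obj (op W)) :
    P.map (f ≫ g).op a = P.map f.op (P.map g.op a) := by
  rw [op_comp, P.map_comp]; rfl

lemma pmap_mono {X Y : C} (f : X ⟶ Y) {a b : P.obj (op Y)} (h : a ≤ b) :
    P.map f.op a ≤ P.map f.op b := OrderHomClass.mono (P.map f.op) h

lemma pmap_inf_comm {X Y : C} (f : X ⟶ Y) {ι : Type*} (s : Finset ι)
    (g : ι → P.obj (op Y)) :
    P.map f.op (s.inf g) = s.inf fun i => P.map f.op (g i) := by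
  simpa [Function.comp_def] using map_finset_inf (P.map f.op) s g

lemma pmap_sup_comm {X Y : C} (f : X ⟶ Y) {ι : Type*} (s : Finset ι)
    (g : ι → P.obj (op Y)) :
    P.map f.op (s.sup g) = s.sup fun i => P.map f.op (g i) := by
  simpa [Function.comp_def] using map_finset_sup (P.map f.op) s g

/-- Transport of an element of a fiber along an equality of objects. -/
def castEl {X Y : C} (h : X = Y) (a : P.obj (op X)) : P.obj (op Y) := h ▸ a

lemma castEl_mem (S : ∀ X : C, Set (P.obj (op X))) {X Y : C} (h : X = Y)
    {a : P.obj (op X)} (ha : a ∈ S X) : castEl P h a ∈ S Y := by subst h; exact ha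

lemma map_castEl {Y Y' W : C} (h : Y = Y') (g : W ⟶ Y') (a : P.obj (op Y)) :
    P.map g.op (castEl P h a) = P.map (g ≫ eqToHom h.symm).op a := by
  subst h; rw [eqToHom_refl, Category.comp_id]; rfl

end DoctrineHelpers
section Gen
open Finset
variable {C : Type u₁} [Category.{v₁} C] [HasFiniteProducts C] (P : Cᵒᵖ ⥤ BoolAlg.{w})
  (A B : ∀ X : C, Set (P.obj (op X)))

/-- Explicit description of the universal filter generated by `A`. -/
def filtGen : ∀ X : C, Set (P.obj (op X)) := fun X =>
  {φ | ∃ (n : ℕ) (Y : Fin n → C) (α : ∀ i, P.obj (op (Y i))) (f : ∀ i, X ⟶ Y i),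
    (∀ i, α i ∈ A (Y i)) ∧
      (Finset.univ.inf fun i => P.map (f i).op (α i)) ≤ φ}

lemma subset_filtGen : ∀ X, A X ⊆ filtGen P A X := by
  intro X φ hφ
  refine ⟨1, fun _ => X, fun _ => φ, fun _ => 𝟙 X, fun _ => hφ, ?_⟩
  refine le_trans (Finset.inf_le (Finset.mem_univ 0)) ?_
  rw [op_id, P.map_id]; rfl

lemma isUniversalFilter_filtGen : IsUniversalFilter P (filtGen P A) := by
  constructor
  · rintro X Y g φ ⟨n, Y', α, f, hα, hle⟩
    refine ⟨n, Y', α, fun i => g ≫ f i, hα, ?_⟩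
    calc (Finset.univ.inf fun i => P.map (g ≫ f i).op (α i))
        = P.map g.op (Finset.univ.inf fun i => P.map (f i).op (α i)) := by
          rw [map_finset_inf]; exact Finset.inf_congr rfl fun i _ => pmap_comp P g (f i) (α i)
      _ ≤ P.map g.op φ := pmap_mono P g hle
  · intro X
    refine ⟨⟨0, Fin.elim0, fun i => i.elim0, fun i => i.elim0, fun i => i.elim0, le_top⟩,
      ?_, ?_⟩
    · rintro φ ψ ⟨n, Y, α, f, hα, hle⟩ ⟨n', Y', α', f', hα', hle'⟩
      refine ⟨n + n', Fin.addCases (motive := fun _ => C) Y Y',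
        Fin.addCases (fun i => castEl P (Fin.addCases_left (motive := fun _ => C) i).symm (α i))
          (fun i => castEl P (Fin.addCases_right (motive := fun _ => C) i).symm (α' i)),
        Fin.addCases (fun i => f i ≫ eqToHom (Fin.addCases_left (motive := fun _ => C) i).symm)
          (fun i => f' i ≫ eqToHom (Fin.addCases_right (motive := fun _ => C) i).symm),
        ?_, ?_⟩
      · intro j
        refine Fin.addCases (motive := fun j => _ ∈ A _) (fun i => ?_) (fun i => ?_) j <;>
          · simp only [Fin.addCases_left, Fin.addCases_right]
            exact castEl_mem P A _ (by first | exact hα i | exact hα' i)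
      · rw [inf_univ_add]
        refine le_trans (inf_le_inf ?_ ?_) (inf_le_inf hle hle') <;>
          · refine le_of_eq (Finset.inf_congr rfl fun i _ => ?_)
            simp only [Fin.addCases_left, Fin.addCases_right, map_castEl, Category.assoc,
              eqToHom_trans, eqToHom_refl, Category.comp_id]
    · rintro φ ψ ⟨n, Y, α, f, hα, hle⟩ hφψ
      exact ⟨n, Y, α, f, hα, le_trans hle hφψ⟩

end Gen

section Ideal
open Finset
variable {C : Type u₁} [Category.{v₁} C] [HasFiniteProducts C] (P : Cᵒᵖ ⥤ BoolAlg.{w})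
  (B : ∀ X : C, Set (P.obj (op X)))

/-- Explicit description of the universal ideal generated by `B`. -/
def idealGen : ∀ X : C, Set (P.obj (op X)) := fun X =>
  {φ | ∃ (m : ℕ) (Z : Fin m → C) (β : ∀ j, P.obj (op (Z j))) (k : ℕ)
      (h : Fin k → ((∏ᶜ Z) ⟶ X)),
      (∀ j, β j ∈ B (Z j)) ∧
        (Finset.univ.inf fun l => P.map (h l).op φ) ≤
          Finset.univ.sup fun j => P.map (Pi.π Z j).op (β j)}

lemma subset_idealGen : ∀ X, B X ⊆ idealGen P B X := by
  intro X φ hφ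
  refine ⟨1, fun _ => X, fun _ => φ, 1, fun _ => Pi.π (fun _ : Fin 1 => X) 0, fun _ => hφ, ?_⟩
  refine le_trans
    (Finset.inf_le (f := fun l : Fin 1 => P.map (Pi.π (fun _ : Fin 1 => X) 0).op φ)
      (Finset.mem_univ 0)) ?_
  exact Finset.le_sup (f := fun j : Fin 1 => P.map (Pi.π (fun _ : Fin 1 => X) j).op φ)
    (Finset.mem_univ 0)

lemma isUniversalIdeal_idealGen : IsUniversalIdeal P (idealGen P B) := by
  refine ⟨?_, ?_, ?_, ?_⟩
  · -- descent
    rintro X Y r f φ ⟨m, Z, β, k, h, hβ, hle⟩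
    refine ⟨m, Z, β, r * k, fun l => h (finProdFinEquiv.symm l).2 ≫ f (finProdFinEquiv.symm l).1,
      hβ, ?_⟩
    rw [← inf_univ_equiv (finProdFinEquiv (m := r) (n := k))]
    calc (Finset.univ.inf fun p : Fin r × Fin k =>
            P.map (h (finProdFinEquiv.symm (finProdFinEquiv p)).2 ≫
              f (finProdFinEquiv.symm (finProdFinEquiv p)).1).op φ)
        = Finset.univ.inf fun p : Fin r × Fin k =>
            P.map (h p.2).op (P.map (f p.1).op φ) := by
          refine Finset.inf_congr rfl fun p _ => ?_
          rw [Equiv.symm_apply_apply, pmap_comp]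
      _ = Finset.univ.inf fun l : Fin k =>
            P.map (h l).op (Finset.univ.inf fun j : Fin r => P.map (f j).op φ) := by
          rw [← Finset.univ_product_univ, Finset.inf_product_right]
          exact Finset.inf_congr rfl fun l _ =>
            (pmap_inf_comm P (h l) Finset.univ fun j => P.map (f j).op φ).symm
      _ ≤ _ := hle
  · -- downward closed
    rintro X a b hab ⟨m, Z, β, k, h, hβ, hle⟩
    refine ⟨m, Z, β, k, h, hβ, le_trans ?_ hle⟩
    exact Finset.inf_mono_fun fun l _ => pmap_mono P _ hab
  · -- joins
    rintro X₁ X₂ φ₁ φ₂ ⟨m, Z, β, k, h, hβ, hle⟩ ⟨m', Z', β', k', h', hβ', hle'⟩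
    set Z'' : Fin (m + m') → C := Fin.addCases (motive := fun _ => C) Z Z' with hZ''
    have hL : ∀ j : Fin m, Z'' (Fin.castAdd m' j) = Z j := fun j =>
      Fin.addCases_left (motive := fun _ => C) j
    have hR : ∀ j : Fin m', Z'' (Fin.natAdd m j) = Z' j := fun j =>
      Fin.addCases_right (motive := fun _ => C) j
    set p : (∏ᶜ Z'') ⟶ ∏ᶜ Z := Pi.lift fun j => Pi.π Z'' (Fin.castAdd m' j) ≫ eqToHom (hL j)
      with hp
    set q : (∏ᶜ Z'') ⟶ ∏ᶜ Z' := Pi.lift fun j => Pi.π Z'' (Fin.natAdd m j) ≫ eqToHom (hR j)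
      with hq
    refine ⟨m + m',  Z'',
      Fin.addCases (fun j => castEl P (hL j).symm (β j)) (fun j => castEl P (hR j).symm (β' j)),
      k * k',
      fun l => prod.lift (p ≫ h (finProdFinEquiv.symm l).1) (q ≫ h' (finProdFinEquiv.symm l).2),
      ?_, ?_⟩
    · intro j
      refine Fin.addCases (motive := fun j => _ ∈ B _) (fun i => ?_) (fun i => ?_) j <;>
        · simp only [Fin.addCases_left, Fin.addCases_right]
          exact castEl_mem P B _ (by first | exact hβ i | exact hβ' i)
    · rw [← inf_univ_equiv (finProdFinEquiv (m := k) (n := k')), sup_univ_add]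
      have key : (Finset.univ.inf fun pr : Fin k × Fin k' =>
          P.map (prod.lift (p ≫ h pr.1) (q ≫ h' pr.2) :
            (∏ᶜ Z'') ⟶ X₁ ⨯ X₂).op (P.map prod.fst.op φ₁ ⊔ P.map prod.snd.op φ₂)) =
          (Finset.univ.inf fun l : Fin k => P.map p.op (P.map (h l).op φ₁)) ⊔
            (Finset.univ.inf fun l : Fin k' => P.map q.op (P.map (h' l).op φ₂)) := by
        rw [Finset.inf_sup_inf, Finset.univ_product_univ]
        refine Finset.inf_congr rfl fun pr _ => ?_
        rw [map_sup, ← pmap_comp, ← pmap_comp, ← pmap_comp, ← pmap_comp,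
          prod.lift_fst, prod.lift_snd]
      calc (Finset.univ.inf fun pr : Fin k × Fin k' =>
              P.map (prod.lift (p ≫ h (finProdFinEquiv.symm (finProdFinEquiv pr)).1)
                (q ≫ h' (finProdFinEquiv.symm (finProdFinEquiv pr)).2) :
                (∏ᶜ Z'') ⟶ X₁ ⨯ X₂).op (P.map prod.fst.op φ₁ ⊔ P.map prod.snd.op φ₂))
          = (Finset.univ.inf fun l : Fin k => P.map p.op (P.map (h l).op φ₁)) ⊔
              (Finset.univ.inf fun l : Fin k' => P.map q.op (P.map (h' l).op φ₂)) := by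
            rw [← key]
            exact Finset.inf_congr rfl fun pr _ => by rw [Equiv.symm_apply_apply]
        _ ≤ (Finset.univ.sup fun j : Fin m =>
                P.map (Pi.π Z'' (Fin.castAdd m' j)).op
                  (Fin.addCases (motive := fun j => (P.obj (op (Z'' j)) : Type w))
                    (fun j => castEl P (hL j).symm (β j))
                    (fun j => castEl P (hR j).symm (β' j)) (Fin.castAdd m' j))) ⊔
              (Finset.univ.sup fun j : Fin m' =>
                P.map (Pi.π Z'' (Fin.natAdd m j)).op
                  (Fin.addCases (motive := fun j => (P.obj (op (Z'' j)) : Type w))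
                    (fun j => castEl P (hL j).symm (β j))
                    (fun j => castEl P (hR j).symm (β' j)) (Fin.natAdd m j))) := by
            refine sup_le_sup ?_ ?_
            · calc (Finset.univ.inf fun l : Fin k => P.map p.op (P.map (h l).op φ₁))
                  = P.map p.op (Finset.univ.inf fun l : Fin k => P.map (h l).op φ₁) :=
                    (pmap_inf_comm P _ _ _).symm
                _ ≤ P.map p.op (Finset.univ.sup fun j => P.map (Pi.π Z j).op (β j)) :=
                    pmap_mono P _ hle
                _ = _ := by
                    rw [pmap_sup_comm]
                    refine Finset.sup_congr rfl fun j _ => ?_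
                    rw [Fin.addCases_left, map_castEl, ← pmap_comp, hp, limit.lift_π]
                    simp only [Fan.mk_pt, Fan.mk_π_app, Category.assoc, eqToHom_trans,
                      eqToHom_refl, Category.comp_id]
            · calc (Finset.univ.inf fun l : Fin k' => P.map q.op (P.map (h' l).op φ₂))
                  = P.map q.op (Finset.univ.inf fun l : Fin k' => P.map (h' l).op φ₂) :=
                    (pmap_inf_comm P _ _ _).symm
                _ ≤ P.map q.op (Finset.univ.sup fun j => P.map (Pi.π Z' j).op (β' j)) :=
                    pmap_mono P _ hle'
                _ = _ := by
                    rw [pmap_sup_comm]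
                    refine Finset.sup_congr rfl fun j _ => ?_
                    rw [Fin.addCases_right, map_castEl, ← pmap_comp, hq, limit.lift_π]
                    simp only [Fan.mk_pt, Fan.mk_π_app, Category.assoc, eqToHom_trans,
                      eqToHom_refl, Category.comp_id]
  · -- bottom
    refine ⟨0, Fin.elim0, fun j => j.elim0, 1, fun _ => terminal.from _, fun j => j.elim0, ?_⟩
    refine le_trans (Finset.inf_le (Finset.mem_univ 0)) ?_
    rw [map_bot]
    exact bot_le

/-- The generated sups lie in every universal ideal containing `B`. -/
lemma sup_mem_univIdeal {J : ∀ X : C, Set (P.obj (op X))} (hJ : IsUniversalIdeal P J)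
    (hBJ : ∀ X, B X ⊆ J X) :
    ∀ (m : ℕ) (Z : Fin m → C) (β : ∀ j, P.obj (op (Z j))), (∀ j, β j ∈ B (Z j)) →
      (Finset.univ.sup fun j => P.map (Pi.π Z j).op (β j)) ∈ J (∏ᶜ Z) := by
  intro m
  induction m with
  | zero =>
    intro Z β _
    have hempty : (Finset.univ.sup fun j => P.map (Pi.π Z j).op (β j)) = ⊥ := by simp
    rw [hempty]
    apply hJ.1 (⊤_ C) (∏ᶜ Z) 1 (fun _ => Pi.lift fun j => j.elim0) ⊥
    have : (Finset.univ.inf fun _ : Fin 1 =>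
        P.map (Pi.lift fun j : Fin 0 => j.elim0 : (⊤_ C) ⟶ ∏ᶜ Z).op (⊥ : P.obj (op (∏ᶜ Z)))) =
        ⊥ := by
      rw [map_bot]
      exact le_antisymm (Finset.inf_le (Finset.mem_univ 0)) bot_le
    rw [this]
    exact hJ.2.2.2
  | succ m ih =>
    intro Z β hβ
    have hs' := ih (fun i => Z i.castSucc) (fun i => β i.castSucc) fun i => hβ _
    have hjoin := hJ.2.2.1 (∏ᶜ fun i : Fin m => Z i.castSucc) (Z (Fin.last m)) _
      (β (Fin.last m)) hs' (hBJ _ (hβ (Fin.last m)))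
    set v : ((∏ᶜ fun i : Fin m => Z i.castSucc) ⨯ Z (Fin.last m)) ⟶ ∏ᶜ Z :=
      Pi.lift fun j => Fin.lastCases
        (motive := fun j => ((∏ᶜ fun i : Fin m => Z i.castSucc) ⨯ Z (Fin.last m)) ⟶ Z j)
        prod.snd (fun i => prod.fst ≫ Pi.π (fun i : Fin m => Z i.castSucc) i) j with hv
    apply hJ.1 _ _ 1 (fun _ => v)
    have h1 : (Finset.univ.inf fun _ : Fin 1 =>
        P.map v.op (Finset.univ.sup fun j => P.map (Pi.π Z j).op (β j))) =
        P.map v.op (Finset.univ.sup fun j => P.map (Pi.π Z j).op (β j)) :=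
      le_antisymm (Finset.inf_le (Finset.mem_univ 0))
        (Finset.le_inf fun _ _ => le_rfl)
    rw [h1]
    have h2 : P.map v.op (Finset.univ.sup fun j => P.map (Pi.π Z j).op (β j)) =
        P.map prod.fst.op (Finset.univ.sup fun i : Fin m =>
          P.map (Pi.π (fun i : Fin m => Z i.castSucc) i).op (β i.castSucc)) ⊔
          P.map prod.snd.op (β (Fin.last m)) := by
      rw [pmap_sup_comm, sup_univ_castSucc]
      congr 1
      · rw [pmap_sup_comm]
        refine Finset.sup_congr rfl fun i _ => ?_
        rw [← pmap_comp, ← pmap_comp, hv, limit.lift_π]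
        simp only [Fan.mk_pt, Fan.mk_π_app, Fin.lastCases_castSucc]
      · rw [← pmap_comp, hv, limit.lift_π]
        simp only [Fan.mk_pt, Fan.mk_π_app, Fin.lastCases_last]
    rw [h2]
    exact hjoin

end Ideal

section Main
open Finset
variable {C : Type u₁} [Category.{v₁} C] [HasFiniteProducts C] (P : Cᵒᵖ ⥤ BoolAlg.{w})
  (A B : ∀ X : C, Set (P.obj (op X)))

theorem stmt12_aux :
    (∃ X : C, (genUnivFilter P A X ∩ genUnivIdeal P B X).Nonempty) ↔
      ∃ (n m : ℕ) (Y : Fin n → C) (Z : Fin m → C) (α : ∀ i, P.obj (op (Y i)))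
        (β : ∀ j, P.obj (op (Z j))) (f : ∀ i, (∏ᶜ Z) ⟶ Y i),
        (∀ i, α i ∈ A (Y i)) ∧ (∀ j, β j ∈ B (Z j)) ∧
          (Finset.univ.inf fun i => P.map (f i).op (α i)) ≤
            Finset.univ.sup fun j => P.map (Pi.π Z j).op (β j) := by
  constructor
  · rintro ⟨X, φ, hF, hI⟩
    obtain ⟨n, Y, α, f, hα, hle⟩ :=
      hF (filtGen P A) (isUniversalFilter_filtGen P A) (subset_filtGen P A)
    obtain ⟨m, Z, β, k, h, hβ, hle'⟩ :=
      hI (idealGen P B) (isUniversalIdeal_idealGen P B) (subset_idealGen P B)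
    refine ⟨n * k, m, fun j => Y (finProdFinEquiv.symm j).1, Z,
      fun j => α (finProdFinEquiv.symm j).1, β,
      fun j => h (finProdFinEquiv.symm j).2 ≫ f (finProdFinEquiv.symm j).1,
      fun j => hα _, hβ, ?_⟩
    rw [← inf_univ_equiv (finProdFinEquiv (m := n) (n := k))]
    calc (Finset.univ.inf fun p : Fin n × Fin k =>
            P.map (h (finProdFinEquiv.symm (finProdFinEquiv p)).2 ≫
              f (finProdFinEquiv.symm (finProdFinEquiv p)).1).op
              (α (finProdFinEquiv.symm (finProdFinEquiv p)).1))
        = Finset.univ.inf fun p : Fin n × Fin k =>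
            P.map (h p.2).op (P.map (f p.1).op (α p.1)) := by
          refine Finset.inf_congr rfl fun p _ => ?_
          rw [Equiv.symm_apply_apply, pmap_comp]
      _ = Finset.univ.inf fun l : Fin k =>
            P.map (h l).op (Finset.univ.inf fun i : Fin n => P.map (f i).op (α i)) := by
          rw [← Finset.univ_product_univ, Finset.inf_product_right]
          exact Finset.inf_congr rfl fun l _ =>
            (pmap_inf_comm P (h l) Finset.univ fun i => P.map (f i).op (α i)).symm
      _ ≤ Finset.univ.inf fun l : Fin k => P.map (h l).op φ :=
          Finset.inf_mono_fun fun l _ => pmap_mono P _ hle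
      _ ≤ _ := hle'
  · rintro ⟨n, m, Y, Z, α, β, f, hα, hβ, hle⟩
    refine ⟨∏ᶜ Z, Finset.univ.inf fun i => P.map (f i).op (α i), ?_, ?_⟩
    · intro G hG hAG
      exact (hG.2 _).finset_inf _ _ fun i _ => hG.1 _ _ (f i) _ (hAG _ (hα i))
    · intro J hJ hBJ
      exact hJ.2.1 _ _ _ hle (sup_mem_univIdeal P B hJ hBJ m Z β hβ)

end Main

theorem stmt12 {C : Type u₁} [Category.{v₁} C] [HasFiniteProducts C]
    (P : Cᵒᵖ ⥤ BoolAlg.{w}) (A B : ∀ X : C, Set (P.obj (op X))) :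
    (∃ X : C, (genUnivFilter P A X ∩ genUnivIdeal P B X).Nonempty) ↔
      ∃ (n m : ℕ) (Y : Fin n → C) (Z : Fin m → C) (α : ∀ i, P.obj (op (Y i)))
        (β : ∀ j, P.obj (op (Z j))) (f : ∀ i, (∏ᶜ Z) ⟶ Y i),
        (∀ i, α i ∈ A (Y i)) ∧ (∀ j, β j ∈ B (Z j)) ∧
          (Finset.univ.inf fun i => P.map (f i).op (α i)) ≤
            Finset.univ.sup fun j => P.map (Pi.π Z j).op (β j) := by
  exact stmt12_aux P A B

end BooleanDoctrine
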